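/- Let n ≥ 1, let U ⊆ ℝⁿ be open, and let b : ℝⁿ → ℝ be a smooth (C^∞) function such that ‖∇b(x)‖ = 1 for every x ∈ U. Define functions g_k on U inductively by g₀ = Δb and g_{k+1}(x) = ⟨∇g_k(x), ∇b(x)⟩. Then for every natural number J ≥ 0 and every x ∈ U, g_J(x) = (−1)^J · J! · Σᵢ κᵢ(x)^{J+1}, where κ₁(x), …, κₙ(x) are the eigenvalues (with multiplicity) of the real symmetric Hessian matrix H(x) of b at x. -/

import Mathlib

/-- The `i`-th partial derivative `∂ᵢ b` at `x`. -/
noncomputable def pd {n : ℕ} (b : (Fin n → ℝ) → ℝ) (i : Fin n) (x : Fin n → ℝ) : ℝ :=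
  fderiv ℝ b x (Pi.single i 1)


lemma contDiff_pd {n : ℕ} {b : (Fin n → ℝ) → ℝ} (hb : ContDiff ℝ (⊤ : ℕ∞) b) (i : Fin n) :
    ContDiff ℝ (⊤ : ℕ∞) (pd b i) :=
  (hb.fderiv_right (by simp)).clm_apply contDiff_const

lemma pd_congr {n : ℕ} {f g : (Fin n → ℝ) → ℝ} {x : Fin n → ℝ} (i : Fin n)
    (h : f =ᶠ[nhds x] g) : pd f i x = pd g i x := by
  unfold pd; rw [h.fderiv_eq]

lemma pd_const {n : ℕ} (c : ℝ) (i : Fin n) (x : Fin n → ℝ) :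
    pd (fun _ => c) i x = 0 := by
  unfold pd; rw [fderiv_fun_const]; simp

lemma pd_mul {n : ℕ} {f g : (Fin n → ℝ) → ℝ} {x : Fin n → ℝ} (i : Fin n)
    (hf : DifferentiableAt ℝ f x) (hg : DifferentiableAt ℝ g x) :
    pd (fun y => f y * g y) i x = pd f i x * g x + f x * pd g i x := by
  unfold pd; rw [fderiv_fun_mul hf hg]
  simp only [ContinuousLinearMap.add_apply, ContinuousLinearMap.coe_smul', Pi.smul_apply, smul_eq_mul]
  ring

lemma pd_sum {n : ℕ} {ι : Type*} (s : Finset ι) {f : ι → (Fin n → ℝ) → ℝ} {x : Fin n → ℝ}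
    (i : Fin n) (hf : ∀ k ∈ s, DifferentiableAt ℝ (f k) x) :
    pd (fun y => ∑ k ∈ s, f k y) i x = ∑ k ∈ s, pd (f k) i x := by
  unfold pd; rw [fderiv_fun_sum hf]; simp

lemma pd_const_mul {n : ℕ} {f : (Fin n → ℝ) → ℝ} {x : Fin n → ℝ} (c : ℝ) (i : Fin n)
    (hf : DifferentiableAt ℝ f x) :
    pd (fun y => c * f y) i x = c * pd f i x := by
  unfold pd; rw [fderiv_const_mul hf]; simp

lemma pd_comm {n : ℕ} {b : (Fin n → ℝ) → ℝ} (hb : ContDiff ℝ (⊤ : ℕ∞) b)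
    (i j : Fin n) (x : Fin n → ℝ) : pd (pd b i) j x = pd (pd b j) i x := by
  have hd : Differentiable ℝ b := hb.differentiable (by simp)
  have hd2 : DifferentiableAt ℝ (fderiv ℝ b) x :=
    ((hb.fderiv_right (m := (⊤ : ℕ∞)) (by simp)).differentiable (by simp)).differentiableAt
  have h1 : ∀ (v : Fin n → ℝ) (j : Fin n), pd (fun y => fderiv ℝ b y v) j x
      = fderiv ℝ (fderiv ℝ b) x (Pi.single j 1) v := by
    intro v j
    unfold pd
    rw [fderiv_clm_apply hd2 (differentiableAt_const v)]
    simp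
  have h2 := second_derivative_symmetric (f := b) (f' := fderiv ℝ b)
      (f'' := fderiv ℝ (fderiv ℝ b) x) (fun y => (hd y).hasFDerivAt) hd2.hasFDerivAt
      (Pi.single i 1) (Pi.single j 1)
  show pd (fun y => fderiv ℝ b y (Pi.single i 1)) j x = pd (fun y => fderiv ℝ b y (Pi.single j 1)) i x
  rw [h1, h1, h2]

/-- The Hessian matrix of `b` at `x`, with entries `∂ᵢ∂ⱼ b (x)`. -/
noncomputable def hess {n : ℕ} (b : (Fin n → ℝ) → ℝ) (x : Fin n → ℝ) :
    Matrix (Fin n) (Fin n) ℝ :=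
  Matrix.of fun i j => pd (pd b j) i x


lemma contDiff_hess_entry {n : ℕ} {b : (Fin n → ℝ) → ℝ} (hb : ContDiff ℝ (⊤ : ℕ∞) b)
    (i j : Fin n) : ContDiff ℝ (⊤ : ℕ∞) (fun x => hess b x i j) :=
  contDiff_pd (contDiff_pd hb j) i

lemma contDiff_hpow_entry {n : ℕ} {b : (Fin n → ℝ) → ℝ} (hb : ContDiff ℝ (⊤ : ℕ∞) b)
    (m : ℕ) (i j : Fin n) : ContDiff ℝ (⊤ : ℕ∞) (fun x => ((hess b x) ^ m) i j) := by
  induction m generalizing i j with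
  | zero => simp only [pow_zero, Matrix.one_apply]; exact contDiff_const
  | succ m ih =>
      have : (fun x => ((hess b x) ^ (m+1)) i j)
          = fun x => ∑ k, ((hess b x) ^ m) i k * hess b x k j := by
        funext x; rw [pow_succ, Matrix.mul_apply]
      rw [this]
      exact ContDiff.sum fun k _ => (ih i k).mul (contDiff_hess_entry hb k j)

lemma trace_pow_eig {n : ℕ} {A : Matrix (Fin n) (Fin n) ℝ} (hA : A.IsHermitian) (m : ℕ) :
    (A ^ m).trace = ∑ i, hA.eigenvalues i ^ m := by
  classical
  set V : Matrix (Fin n) (Fin n) ℝ := (hA.eigenvectorUnitary : Matrix (Fin n) (Fin n) ℝ) with hVdef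
  set D : Matrix (Fin n) (Fin n) ℝ := Matrix.diagonal (RCLike.ofReal ∘ hA.eigenvalues) with hDdef
  have hV : V * star V = 1 := Matrix.mem_unitaryGroup_iff.mp hA.eigenvectorUnitary.2
  have hV' : star V * V = 1 := Matrix.mem_unitaryGroup_iff'.mp hA.eigenvectorUnitary.2
  have hpow : A ^ m = V * D ^ m * star V := by
    induction m with
    | zero => simp [hV]
    | succ m ih =>
        rw [pow_succ, ih]
        nth_rewrite 1 [hA.spectral_theorem, Unitary.conjStarAlgAut_apply]
        rw [pow_succ]
        have h3 : star V * (V * (D * star V)) = D * star V := by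
          rw [← Matrix.mul_assoc, hV', Matrix.one_mul]
        simp only [Matrix.mul_assoc, ← hVdef, ← hDdef, h3]
  rw [hpow, Matrix.trace_mul_comm, ← Matrix.mul_assoc, hV', Matrix.one_mul, hDdef,
    Matrix.diagonal_pow, Matrix.trace_diagonal]
  simp [RCLike.ofReal_real_eq_id]

lemma diffAt {n : ℕ} {f : (Fin n → ℝ) → ℝ} (hf : ContDiff ℝ (⊤ : ℕ∞) f) (x : Fin n → ℝ) :
    DifferentiableAt ℝ f x :=
  (hf.differentiable (by simp)).differentiableAt

section claims
variable {n : ℕ} {U : Set (Fin n → ℝ)} {b : (Fin n → ℝ) → ℝ}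
variable (hU : IsOpen U) (hb : ContDiff ℝ (⊤ : ℕ∞) b)
variable (heik : ∀ x ∈ U, ∑ k, (pd b k x) ^ 2 = 1)

include hU hb heik in
lemma claim1 : ∀ x ∈ U, ∀ i, ∑ k, pd b k x * pd (pd b i) k x = 0 := by
  intro x hx i
  have hF : (fun y => ∑ k, pd b k y * pd b k y) =ᶠ[nhds x] fun _ => 1 := by
    apply Filter.eventuallyEq_of_mem (hU.mem_nhds hx)
    intro y hy
    simpa [sq] using heik y hy
  have h0 : pd (fun y => ∑ k, pd b k y * pd b k y) i x = 0 := by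
    rw [pd_congr i hF, pd_const]
  rw [pd_sum (f := fun k y => pd b k y * pd b k y) Finset.univ i (fun k _ => (diffAt (contDiff_pd hb k) x).mul (diffAt (contDiff_pd hb k) x))] at h0
  have hexp : ∀ k : Fin n, pd (fun y => pd b k y * pd b k y) i x
      = 2 * (pd b k x * pd (pd b i) k x) := by
    intro k
    rw [pd_mul i (diffAt (contDiff_pd hb k) x) (diffAt (contDiff_pd hb k) x),
      pd_comm hb k i]
    ring
  rw [Finset.sum_congr rfl (fun k _ => hexp k), ← Finset.mul_sum] at h0
  linarith

include hU hb heik in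
lemma claim2 : ∀ x ∈ U, ∀ i j, ∑ k, pd b k x * pd (pd (pd b j) i) k x
    = -(((hess b x) ^ 2) i j) := by
  intro x hx i j
  have hG : (fun y => ∑ k, pd b k y * pd (pd b j) k y) =ᶠ[nhds x] fun _ => 0 := by
    apply Filter.eventuallyEq_of_mem (hU.mem_nhds hx)
    intro y hy
    exact claim1 hU hb heik y hy j
  have h0 : pd (fun y => ∑ k, pd b k y * pd (pd b j) k y) i x = 0 := by
    rw [pd_congr i hG, pd_const]
  rw [pd_sum (f := fun k y => pd b k y * pd (pd b j) k y) Finset.univ i (fun k _ =>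
    (diffAt (contDiff_pd hb k) x).mul (diffAt (contDiff_pd (contDiff_pd hb j) k) x))] at h0
  have hexp : ∀ k : Fin n, pd (fun y => pd b k y * pd (pd b j) k y) i x
      = hess b x i k * hess b x k j + pd b k x * pd (pd (pd b j) i) k x := by
    intro k
    rw [pd_mul i (diffAt (contDiff_pd hb k) x) (diffAt (contDiff_pd (contDiff_pd hb j) k) x),
      pd_comm (contDiff_pd hb j) k i]
    simp [hess]
  rw [Finset.sum_congr rfl (fun k _ => hexp k), Finset.sum_add_distrib] at h0
  have hsq : ∑ k, hess b x i k * hess b x k j = ((hess b x) ^ 2) i j := by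
    rw [pow_two, Matrix.mul_apply]
  linarith [h0, hsq]

include hU hb heik in
lemma claim3 : ∀ m : ℕ, ∀ x ∈ U, ∀ i j,
    ∑ k, pd b k x * pd (fun y => ((hess b y) ^ (m+1)) i j) k x
      = -((m+1 : ℝ)) * ((hess b x) ^ (m+2)) i j := by
  intro m
  induction m with
  | zero =>
      intro x hx i j
      have h1 : (fun y => ((hess b y) ^ 1) i j) = pd (pd b j) i := by
        funext y; simp [pow_one, hess]
      rw [h1]
      simpa [pow_one] using claim2 hU hb heik x hx i j
  | succ m ih =>
      intro x hx i j
      have hQeq : ∀ l : Fin n, (fun y => hess b y l j) = pd (pd b j) l := by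
        intro l; funext y; simp [hess]
      have hq : ∀ l : Fin n, ∑ k, pd b k x * pd (fun y => hess b y l j) k x
          = -(((hess b x) ^ 2) l j) := by
        intro l; rw [hQeq l]; exact claim2 hU hb heik x hx l j
      have hrw : (fun y => ((hess b y) ^ (m+2)) i j)
          = fun y => ∑ l, ((hess b y) ^ (m+1)) i l * hess b y l j := by
        funext y; rw [pow_succ, Matrix.mul_apply]
      have h1 : ∀ k : Fin n, pd (fun y => ((hess b y) ^ (m+2)) i j) k x
          = ∑ l, (pd (fun y => ((hess b y) ^ (m+1)) i l) k x * hess b x l j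
              + ((hess b x) ^ (m+1)) i l * pd (fun y => hess b y l j) k x) := by
        intro k
        rw [hrw, pd_sum (f := fun l y => ((hess b y) ^ (m+1)) i l * hess b y l j) Finset.univ k (fun l _ =>
          (diffAt (contDiff_hpow_entry hb (m+1) i l) x).mul (diffAt (contDiff_hess_entry hb l j) x))]
        exact Finset.sum_congr rfl fun l _ => pd_mul k
          (diffAt (contDiff_hpow_entry hb (m+1) i l) x) (diffAt (contDiff_hess_entry hb l j) x)
      calc ∑ k, pd b k x * pd (fun y => ((hess b y) ^ (m+2)) i j) k x
          = ∑ k, ∑ l, ((pd b k x * pd (fun y => ((hess b y) ^ (m+1)) i l) k x) * hess b x l j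
              + ((hess b x) ^ (m+1)) i l * (pd b k x * pd (fun y => hess b y l j) k x)) := by
            refine Finset.sum_congr rfl fun k _ => ?_
            rw [h1 k, Finset.mul_sum]
            exact Finset.sum_congr rfl fun l _ => by ring
        _ = ∑ l, ∑ k, ((pd b k x * pd (fun y => ((hess b y) ^ (m+1)) i l) k x) * hess b x l j
              + ((hess b x) ^ (m+1)) i l * (pd b k x * pd (fun y => hess b y l j) k x)) :=
            Finset.sum_comm
        _ = ∑ l, ((∑ k, pd b k x * pd (fun y => ((hess b y) ^ (m+1)) i l) k x) * hess b x l j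
              + ((hess b x) ^ (m+1)) i l * (∑ k, pd b k x * pd (fun y => hess b y l j) k x)) := by
            refine Finset.sum_congr rfl fun l _ => ?_
            rw [Finset.sum_add_distrib, ← Finset.sum_mul, ← Finset.mul_sum]
        _ = ∑ l, ((-((m+1 : ℝ)) * ((hess b x) ^ (m+2)) i l) * hess b x l j
              + ((hess b x) ^ (m+1)) i l * (-(((hess b x) ^ 2) l j))) := by
            refine Finset.sum_congr rfl fun l _ => ?_
            rw [ih x hx i l, hq l]
        _ = -((m+1 : ℝ)) * (((hess b x) ^ (m+2)) * hess b x) i j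
              - (((hess b x) ^ (m+1)) * ((hess b x) ^ 2)) i j := by
            rw [Finset.sum_add_distrib, Matrix.mul_apply, Matrix.mul_apply,
              Finset.mul_sum]
            congr 1
            · exact Finset.sum_congr rfl fun l _ => by ring
            · rw [← Finset.sum_neg_distrib]
              exact Finset.sum_congr rfl fun l _ => by ring
        _ = -(((m+1 : ℕ) : ℝ) + 1) * ((hess b x) ^ (m+1+2)) i j := by
            rw [← pow_succ, ← pow_add]
            push_cast
            ring

include hU hb heik in
lemma claim4 : ∀ m : ℕ, ∀ x ∈ U,
    ∑ k, pd b k x * pd (fun y => ((hess b y) ^ (m+1)).trace) k x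
      = -((m+1 : ℝ)) * ((hess b x) ^ (m+2)).trace := by
  intro m x hx
  have htr : ∀ (y : Fin n → ℝ) (m' : ℕ), ((hess b y) ^ m').trace = ∑ i, ((hess b y) ^ m') i i := by
    intro y m'; rfl
  calc ∑ k, pd b k x * pd (fun y => ((hess b y) ^ (m+1)).trace) k x
      = ∑ k, pd b k x * ∑ i, pd (fun y => ((hess b y) ^ (m+1)) i i) k x := by
        refine Finset.sum_congr rfl fun k _ => ?_
        congr 1
        rw [show (fun y => ((hess b y) ^ (m+1)).trace) = fun y => ∑ i, ((hess b y) ^ (m+1)) i i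
          from funext fun y => htr y (m+1)]
        exact pd_sum Finset.univ k fun i _ => diffAt (contDiff_hpow_entry hb (m+1) i i) x
    _ = ∑ i, ∑ k, pd b k x * pd (fun y => ((hess b y) ^ (m+1)) i i) k x := by
        rw [Finset.sum_comm]
        exact Finset.sum_congr rfl fun k _ => Finset.mul_sum ..
    _ = ∑ i, -((m+1 : ℝ)) * ((hess b x) ^ (m+2)) i i :=
        Finset.sum_congr rfl fun i _ => claim3 hU hb heik m x hx i i
    _ = -((m+1 : ℝ)) * ((hess b x) ^ (m+2)).trace := by
        rw [htr x (m+2), Finset.mul_sum]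
end claims

/-- Iterated derivatives of the mean curvature `Δb = tr H` along the unit normal
direction `∇b`:  `g₀ = Δb` and `g_{k+1} = ⟨∇g_k, ∇b⟩`. -/
noncomputable def normalIter {n : ℕ} (b : (Fin n → ℝ) → ℝ) : ℕ → (Fin n → ℝ) → ℝ
  | 0 => fun x => Matrix.trace (hess b x)
  | J + 1 => fun x => ∑ i, pd (normalIter b J) i x * pd b i x


section main
variable {n : ℕ} {U : Set (Fin n → ℝ)} {b : (Fin n → ℝ) → ℝ}
variable (hU : IsOpen U) (hb : ContDiff ℝ (⊤ : ℕ∞) b)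
variable (heik : ∀ x ∈ U, ∑ k, (pd b k x) ^ 2 = 1)

include hU hb heik in
lemma mainlem : ∀ J : ℕ, ∀ x ∈ U,
    normalIter b J x = (-1 : ℝ) ^ J * (Nat.factorial J : ℝ) * ((hess b x) ^ (J+1)).trace := by
  intro J
  induction J with
  | zero => intro x hx; simp [normalIter, pow_one]
  | succ J ih =>
      intro x hx
      have htr_cd : ContDiff ℝ (⊤ : ℕ∞) (fun y => ((hess b y) ^ (J+1)).trace) := by
        have h : (fun y => ((hess b y) ^ (J+1)).trace)
            = fun y => ∑ i, ((hess b y) ^ (J+1)) i i := rfl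
        rw [h]
        exact ContDiff.sum fun i _ => contDiff_hpow_entry hb (J+1) i i
      have hpdni : ∀ i, pd (normalIter b J) i x
          = ((-1 : ℝ) ^ J * (Nat.factorial J : ℝ)) * pd (fun y => ((hess b y) ^ (J+1)).trace) i x := by
        intro i
        have he : normalIter b J =ᶠ[nhds x]
            fun y => ((-1 : ℝ) ^ J * (Nat.factorial J : ℝ)) * ((hess b y) ^ (J+1)).trace := by
          apply Filter.eventuallyEq_of_mem (hU.mem_nhds hx)
          intro y hy; exact ih y hy
        rw [pd_congr i he, pd_const_mul _ i (diffAt htr_cd x)]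
      calc normalIter b (J+1) x = ∑ i, pd (normalIter b J) i x * pd b i x := rfl
        _ = ((-1 : ℝ) ^ J * (Nat.factorial J : ℝ))
              * ∑ i, pd b i x * pd (fun y => ((hess b y) ^ (J+1)).trace) i x := by
            rw [Finset.mul_sum]
            exact Finset.sum_congr rfl fun i _ => by rw [hpdni i]; ring
        _ = ((-1 : ℝ) ^ J * (Nat.factorial J : ℝ))
              * (-((J : ℝ)+1) * ((hess b x) ^ (J+2)).trace) := by
            rw [claim4 hU hb heik J x hx]
        _ = (-1 : ℝ) ^ (J+1) * (Nat.factorial (J+1) : ℝ) * ((hess b x) ^ (J+1+1)).trace := by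
            rw [Nat.factorial_succ]
            push_cast
            ring
end main

/-- If `b` is smooth and satisfies the eikonal identity `‖∇b‖ = 1` on an open set,
then all iterated normal derivatives of the mean curvature are determined by the
eigenvalues (principal curvatures) of the symmetric Hessian:
`∂_ν^J κ = (-1)^J · J! · Σᵢ κᵢ^{J+1}`. -/
theorem iterated_normal_deriv_mean_curvature_eigenvalues {n : ℕ} (hn : 1 ≤ n)
    (U : Set (Fin n → ℝ)) (hU : IsOpen U)
    (b : (Fin n → ℝ) → ℝ) (hb : ContDiff ℝ (⊤ : ℕ∞) b)
    (heik : ∀ x ∈ U, ∑ k, (pd b k x) ^ 2 = 1) :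
    ∀ J : ℕ, ∀ x ∈ U, ∀ hH : (hess b x).IsHermitian,
      normalIter b J x
        = (-1 : ℝ) ^ J * (Nat.factorial J : ℝ) * ∑ i, (hH.eigenvalues i) ^ (J + 1) := by
  intro J x hx hH
  rw [mainlem hU hb heik J x hx, trace_pow_eig hH (J+1)]
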